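/- Let p be a prime, r ≥ 1 an integer, and suppose f(x) ∈ ℚ[x] is a p^r-Dumas polynomial of degree d ≥ 1, i.e., f is p^r-pure and gcd(r, d) = 1. Then the n-th iterate f^n(x) is irreducible over ℚ for every integer n ≥ 1. -/

import Mathlib

open Polynomial

/-- The `n`-th compositional iterate of `f`: `f^0 = X`, `f^{n+1} = f ∘ f^n`. -/
noncomputable def polyIter (f : Polynomial ℚ) : ℕ → Polynomial ℚ
  | 0 => Polynomial.X
  | n + 1 => f.comp (polyIter f n)

/-- The `p`-adic valuation of a rational number, viewed as a rational number. -/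
def nuQ (p : ℕ) (x : ℚ) : ℚ := (padicValRat p x : ℚ)

/-- `NP_p(h)` has successive vertices `(xs 0, ys 0), …, (xs t, ys t)`:
the corresponding coefficients are nonzero and have the prescribed valuations,
the slopes are strictly increasing, and every point of the Newton diagram lies
on or above the polygon. -/
def HasNPVertices (p : ℕ) (h : Polynomial ℚ) (t : ℕ) (xs : ℕ → ℕ) (ys : ℕ → ℚ) : Prop :=
  h.coeff 0 ≠ 0 ∧
  xs 0 = 0 ∧ xs t = h.natDegree ∧
  (∀ s, s < t → xs s < xs (s + 1)) ∧
  (∀ s, s ≤ t → h.coeff (h.natDegree - xs s) ≠ 0 ∧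
      nuQ p (h.coeff (h.natDegree - xs s)) = ys s) ∧
  (∀ s, 1 ≤ s → s < t →
      (ys s - ys (s - 1)) / ((xs s : ℚ) - (xs (s - 1) : ℚ)) <
        (ys (s + 1) - ys s) / ((xs (s + 1) : ℚ) - (xs s : ℚ))) ∧
  (∀ s, 1 ≤ s → s ≤ t → ∀ i, h.coeff i ≠ 0 →
      xs (s - 1) ≤ h.natDegree - i → h.natDegree - i ≤ xs s →
      ys (s - 1) + ((ys s - ys (s - 1)) / ((xs s : ℚ) - (xs (s - 1) : ℚ))) *
          (((h.natDegree - i : ℕ) : ℚ) - (xs (s - 1) : ℚ)) ≤ nuQ p (h.coeff i))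

/-- The number of irreducible factors of a polynomial over `ℚ`,
counted with multiplicity. -/
noncomputable def numFactors (P : Polynomial ℚ) : ℕ :=
  (UniqueFactorizationMonoid.factors P).card

/-- `f` is `p^r`-pure. -/
def IsPpure (p r : ℕ) (f : Polynomial ℚ) : Prop :=
  f.coeff 0 ≠ 0 ∧
  padicValRat p f.leadingCoeff = 0 ∧
  padicValRat p (f.coeff 0) = (r : ℤ) ∧
  ∀ i, 0 < i → i < f.natDegree → f.coeff i ≠ 0 →
    (r : ℚ) / (f.natDegree : ℚ) ≤ nuQ p (f.coeff i) / ((f.natDegree : ℚ) - (i : ℚ))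
/-! ### Auxiliary lemmas about `nuQ` -/

section NuQ

variable {p : ℕ} [hp : Fact p.Prime]

lemma nuQ_mul {x y : ℚ} (hx : x ≠ 0) (hy : y ≠ 0) :
    nuQ p (x * y) = nuQ p x + nuQ p y := by
  unfold nuQ; rw [padicValRat.mul hx hy]; push_cast; ring

lemma nuQ_pow {x : ℚ} (hx : x ≠ 0) (k : ℕ) :
    nuQ p (x ^ k) = (k : ℚ) * nuQ p x := by
  unfold nuQ; rw [padicValRat.pow x]; push_cast; ring

lemma nuQ_neg (x : ℚ) : nuQ p (-x) = nuQ p x := by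
  unfold nuQ; rw [padicValRat.neg]

lemma nuQ_one : nuQ p (1 : ℚ) = 0 := by
  unfold nuQ; rw [padicValRat.one]; norm_num

lemma nuQ_min_le {x y : ℚ} (hxy : x + y ≠ 0) :
    min (nuQ p x) (nuQ p y) ≤ nuQ p (x + y) := by
  have h := padicValRat.min_le_padicValRat_add (p := p) hxy
  unfold nuQ
  rcases le_total (padicValRat p x) (padicValRat p y) with h' | h'
  · rw [min_eq_left h'] at h; rw [min_eq_left (by exact_mod_cast h')]; exact_mod_cast h
  · rw [min_eq_right h'] at h; rw [min_eq_right (by exact_mod_cast h')]; exact_mod_cast h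

lemma nuQ_sum_le {ι : Type*} {s : Finset ι} {t : ι → ℚ} {c : ℚ}
    (h : ∀ i ∈ s, t i ≠ 0 → c ≤ nuQ p (t i)) (hs : ∑ i ∈ s, t i ≠ 0) :
    c ≤ nuQ p (∑ i ∈ s, t i) := by
  classical
  induction s using Finset.induction_on with
  | empty => simp at hs
  | @insert a s ha ih =>
    rw [Finset.sum_insert ha] at hs ⊢
    by_cases h0 : t a = 0
    · rw [h0, zero_add] at hs ⊢
      exact ih (fun i hi hti => h i (Finset.mem_insert_of_mem hi) hti) hs
    by_cases hrest : ∑ i ∈ s, t i = 0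
    · rw [hrest, add_zero] at hs ⊢
      exact h a (Finset.mem_insert_self _ _) h0
    · refine le_trans (le_min (h a (Finset.mem_insert_self _ _) h0)
        (ih (fun i hi hti => h i (Finset.mem_insert_of_mem hi) hti) hrest)) (nuQ_min_le hs)

lemma nuQ_sum_lt {ι : Type*} {s : Finset ι} {t : ι → ℚ} {c : ℚ}
    (h : ∀ i ∈ s, t i ≠ 0 → c < nuQ p (t i)) (hs : ∑ i ∈ s, t i ≠ 0) :
    c < nuQ p (∑ i ∈ s, t i) := by
  classical
  induction s using Finset.induction_on with
  | empty => simp at hs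
  | @insert a s ha ih =>
    rw [Finset.sum_insert ha] at hs ⊢
    by_cases h0 : t a = 0
    · rw [h0, zero_add] at hs ⊢
      exact ih (fun i hi hti => h i (Finset.mem_insert_of_mem hi) hti) hs
    by_cases hrest : ∑ i ∈ s, t i = 0
    · rw [hrest, add_zero] at hs ⊢
      exact h a (Finset.mem_insert_self _ _) h0
    · refine lt_of_lt_of_le (lt_min (h a (Finset.mem_insert_self _ _) h0)
        (ih (fun i hi hti => h i (Finset.mem_insert_of_mem hi) hti) hrest)) (nuQ_min_le hs)

lemma nuQ_add_eq {x y : ℚ} (hx : x ≠ 0) (hy : y ≠ 0) (hlt : nuQ p x < nuQ p y) :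
    x + y ≠ 0 ∧ nuQ p (x + y) = nuQ p x := by
  have hne : x + y ≠ 0 := by
    intro h
    have hyx : y = -x := by linarith [eq_neg_of_add_eq_zero_right h]
    rw [hyx, nuQ_neg] at hlt
    exact lt_irrefl _ hlt
  refine ⟨hne, ?_⟩
  unfold nuQ at hlt ⊢
  rw [padicValRat.add_eq_of_lt hne hx hy (by exact_mod_cast hlt)]

lemma nuQ_sum_dom {ι : Type*} [DecidableEq ι] {s : Finset ι} {t : ι → ℚ} {a : ι}
    (ha : a ∈ s) (hta : t a ≠ 0)
    (h : ∀ i ∈ s, i ≠ a → t i ≠ 0 → nuQ p (t a) < nuQ p (t i)) :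
    (∑ i ∈ s, t i) ≠ 0 ∧ nuQ p (∑ i ∈ s, t i) = nuQ p (t a) := by
  rw [← Finset.add_sum_erase s t ha]
  by_cases hrest : ∑ i ∈ s.erase a, t i = 0
  · rw [hrest, add_zero]; exact ⟨hta, rfl⟩
  · have hlt : nuQ p (t a) < nuQ p (∑ i ∈ s.erase a, t i) :=
      nuQ_sum_lt (fun i hi hti =>
        h i (Finset.mem_of_mem_erase hi) (Finset.ne_of_mem_erase hi) hti) hrest
    exact nuQ_add_eq hta hrest hlt

end NuQ

/-! ### Coefficient lower bounds (Newton polygon above a line) -/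

/-- `NB p s c g` : every nonzero coefficient `g_j` satisfies `ν(g_j) ≥ c - s j`. -/
def NB (p : ℕ) (s c : ℚ) (g : Polynomial ℚ) : Prop :=
  ∀ j : ℕ, g.coeff j ≠ 0 → c - s * j ≤ nuQ p (g.coeff j)

section NB

variable {p : ℕ} [hp : Fact p.Prime] {s : ℚ}

lemma NB.mul {c₁ c₂ : ℚ} {g h : Polynomial ℚ} (hg : NB p s c₁ g) (hh : NB p s c₂ h) :
    NB p s (c₁ + c₂) (g * h) := by
  intro k hk
  rw [Polynomial.coeff_mul] at hk ⊢
  refine nuQ_sum_le (fun x hx htx => ?_) hk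
  have h1 : g.coeff x.1 ≠ 0 := left_ne_zero_of_mul htx
  have h2 : h.coeff x.2 ≠ 0 := right_ne_zero_of_mul htx
  rw [nuQ_mul h1 h2]
  have hx12 : x.1 + x.2 = k := Finset.HasAntidiagonal.mem_antidiagonal.mp hx
  have b1 := hg x.1 h1
  have b2 := hh x.2 h2
  have : ((k : ℚ)) = (x.1 : ℚ) + (x.2 : ℚ) := by exact_mod_cast hx12.symm
  rw [this]; ring_nf; ring_nf at b1 b2; linarith

lemma NB.pow {c : ℚ} {g : Polynomial ℚ} (hg : NB p s c g) (i : ℕ) :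
    NB p s ((i : ℚ) * c) (g ^ i) := by
  induction i with
  | zero =>
    intro j hj
    rw [pow_zero, Polynomial.coeff_one] at hj ⊢
    by_cases hj0 : j = 0
    · subst hj0; simp [nuQ_one]
    · simp [hj0] at hj
  | succ i ih =>
    have := ih.mul hg
    rw [pow_succ]
    intro j hj
    have := this j hj
    push_cast
    push_cast at this
    linarith

end NB

/-- `F` is a pure polynomial of degree `D` with constant-coefficient valuation `r`:
its Newton polygon is the single segment from `(0, r)` to `(D, 0)`. -/
def PureAt (p r D : ℕ) (F : Polynomial ℚ) : Prop :=
  F.natDegree = D ∧ F.coeff 0 ≠ 0 ∧ nuQ p (F.coeff 0) = r ∧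
    nuQ p F.leadingCoeff = 0 ∧ NB p ((r : ℚ) / D) r F

/-! ### The Dumas irreducibility criterion -/

section Dumas

variable {p : ℕ} [hp : Fact p.Prime]

/-- Extremal minimizers of the weighted valuation `j ↦ ν(Q_j) + s j` on the support. -/
lemma exists_extremal (s : ℚ) (Q : Polynomial ℚ) (hQ : Q ≠ 0) :
    ∃ μ : ℚ, ∃ a b : ℕ,
      Q.coeff a ≠ 0 ∧ Q.coeff b ≠ 0 ∧
      nuQ p (Q.coeff a) + s * a = μ ∧ nuQ p (Q.coeff b) + s * b = μ ∧
      (∀ j, Q.coeff j ≠ 0 → μ ≤ nuQ p (Q.coeff j) + s * j) ∧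
      (∀ j, Q.coeff j ≠ 0 → j < a → μ < nuQ p (Q.coeff j) + s * j) ∧
      (∀ j, Q.coeff j ≠ 0 → b < j → μ < nuQ p (Q.coeff j) + s * j) := by
  classical
  have hne : Q.support.Nonempty := Polynomial.nonempty_support_iff.mpr hQ
  set W : ℕ → ℚ := fun j => nuQ p (Q.coeff j) + s * j with hW
  set μ : ℚ := Q.support.inf' hne W with hμ
  have hA : (Q.support.filter (fun j => W j = μ)).Nonempty := by
    obtain ⟨i, hi, hieq⟩ := Finset.exists_mem_eq_inf' hne W
    exact ⟨i, Finset.mem_filter.mpr ⟨hi, hieq.symm⟩⟩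
  set a : ℕ := (Q.support.filter (fun j => W j = μ)).min' hA with hadef
  set b : ℕ := (Q.support.filter (fun j => W j = μ)).max' hA with hbdef
  have hamem := (Q.support.filter (fun j => W j = μ)).min'_mem hA
  have hbmem := (Q.support.filter (fun j => W j = μ)).max'_mem hA
  rw [Finset.mem_filter] at hamem hbmem
  have hlow : ∀ j, Q.coeff j ≠ 0 → μ ≤ W j := fun j hj =>
    Finset.inf'_le W (Polynomial.mem_support_iff.mpr hj)
  refine ⟨μ, a, b, Polynomial.mem_support_iff.mp hamem.1, Polynomial.mem_support_iff.mp hbmem.1,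
    hamem.2, hbmem.2, hlow, ?_, ?_⟩
  · intro j hj hja
    rcases lt_or_eq_of_le (hlow j hj) with h | h
    · exact h
    · exfalso
      have : a ≤ j := Finset.min'_le _ _
        (Finset.mem_filter.mpr ⟨Polynomial.mem_support_iff.mpr hj, h.symm⟩)
      omega
  · intro j hj hjb
    rcases lt_or_eq_of_le (hlow j hj) with h | h
    · exact h
    · exfalso
      have : j ≤ b := Finset.le_max' _ _
        (Finset.mem_filter.mpr ⟨Polynomial.mem_support_iff.mpr hj, h.symm⟩)
      omega

set_option maxHeartbeats 1000000 in
/-- The Dumas irreducibility criterion for a pure polynomial. -/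
lemma dumas_irreducible (r D : ℕ) (hr : 1 ≤ r) (hD : 2 ≤ D)
    (hco : Nat.Coprime r D) (F : Polynomial ℚ) (hP : PureAt p r D F) :
    Irreducible F := by
  classical
  obtain ⟨hdeg, h0ne, h0val, hlead, hNB⟩ := hP
  have hF0 : F ≠ 0 := fun h => h0ne (by simp [h])
  set s : ℚ := (r : ℚ) / D with hs
  have hDQ : (0 : ℚ) < D := by positivity
  have hsD : s * D = r := by rw [hs]; field_simp
  constructor
  · intro hu
    have := Polynomial.natDegree_eq_zero_of_isUnit hu
    omega
  intro G H hGH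
  by_contra hcon
  push_neg at hcon
  obtain ⟨hGu, hHu⟩ := hcon
  have hGne : G ≠ 0 := fun h => hF0 (by rw [hGH, h, zero_mul])
  have hHne : H ≠ 0 := fun h => hF0 (by rw [hGH, h, mul_zero])
  have hGdeg : 1 ≤ G.natDegree := by
    rcases Nat.eq_zero_or_pos G.natDegree with h | h
    · exact absurd ((Polynomial.eq_C_of_natDegree_eq_zero h) ▸
        (Polynomial.isUnit_C.mpr (isUnit_iff_ne_zero.mpr (by
          intro hc; apply hGne; rw [Polynomial.eq_C_of_natDegree_eq_zero h, hc, map_zero])))) hGu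
    · exact h
  have hHdeg : 1 ≤ H.natDegree := by
    rcases Nat.eq_zero_or_pos H.natDegree with h | h
    · exact absurd ((Polynomial.eq_C_of_natDegree_eq_zero h) ▸
        (Polynomial.isUnit_C.mpr (isUnit_iff_ne_zero.mpr (by
          intro hc; apply hHne; rw [Polynomial.eq_C_of_natDegree_eq_zero h, hc, map_zero])))) hHu
    · exact h
  have hmk : G.natDegree + H.natDegree = D := by
    rw [← hdeg, hGH, Polynomial.natDegree_mul hGne hHne]
  set m := G.natDegree with hm
  -- extremal data for G and H
  obtain ⟨μG, aG, bG, haG, hbG, haGval, hbGval, hGlow, hGlt, hGgt⟩ :=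
    exists_extremal (p := p) s G hGne
  obtain ⟨μH, aH, bH, haH, hbH, haHval, hbHval, hHlow, hHlt, hHgt⟩ :=
    exists_extremal (p := p) s H hHne
  -- generic lower bound for coefficients of G * H
  have prodlow : ∀ k, (G * H).coeff k ≠ 0 →
      μG + μH - s * k ≤ nuQ p ((G * H).coeff k) := by
    intro k hk
    rw [Polynomial.coeff_mul] at hk ⊢
    refine nuQ_sum_le (fun x hx htx => ?_) hk
    have h1 : G.coeff x.1 ≠ 0 := left_ne_zero_of_mul htx
    have h2 : H.coeff x.2 ≠ 0 := right_ne_zero_of_mul htx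
    rw [nuQ_mul h1 h2]
    have hx12 : (x.1 : ℚ) + (x.2 : ℚ) = (k : ℚ) := by
      exact_mod_cast Finset.HasAntidiagonal.mem_antidiagonal.mp hx
    have b1 := hGlow x.1 h1
    have b2 := hHlow x.2 h2
    have hdist : s * (k : ℚ) = s * (x.1 : ℚ) + s * (x.2 : ℚ) := by rw [← hx12]; ring
    linarith
  -- dominance at the extremal corners
  have hdomA : (G * H).coeff (aG + aH) ≠ 0 ∧
      nuQ p ((G * H).coeff (aG + aH)) = μG + μH - s * (aG + aH) := by
    rw [Polynomial.coeff_mul]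
    have hmem : ((aG, aH) : ℕ × ℕ) ∈ Finset.HasAntidiagonal.antidiagonal (aG + aH) :=
      Finset.HasAntidiagonal.mem_antidiagonal.mpr rfl
    have hta : G.coeff aG * H.coeff aH ≠ 0 := mul_ne_zero haG haH
    have hval : nuQ p (G.coeff aG * H.coeff aH) = μG + μH - s * ((aG : ℚ) + aH) := by
      rw [nuQ_mul haG haH]; linear_combination haGval + haHval
    have hdom := nuQ_sum_dom (p := p)
      (t := fun x : ℕ × ℕ => G.coeff x.1 * H.coeff x.2) hmem hta (fun x hx hxa htx => by
      have h1 : G.coeff x.1 ≠ 0 := left_ne_zero_of_mul htx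
      have h2 : H.coeff x.2 ≠ 0 := right_ne_zero_of_mul htx
      rw [nuQ_mul h1 h2, hval]
      have hx12 : x.1 + x.2 = aG + aH := Finset.HasAntidiagonal.mem_antidiagonal.mp hx
      have hx12Q : (x.1 : ℚ) + (x.2 : ℚ) = (aG : ℚ) + aH := by exact_mod_cast hx12
      have hcases : x.1 < aG ∨ x.2 < aH := by
        rcases Nat.lt_or_ge x.1 aG with h | h
        · exact Or.inl h
        · right
          have : x.1 = aG ∨ aG < x.1 := eq_or_lt_of_le h |>.imp Eq.symm id
          rcases this with h' | h'
          · exfalso; apply hxa; ext <;> simp [h'] <;> omega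
          · omega
      have hdist : s * ((aG : ℚ) + aH) = s * (x.1 : ℚ) + s * (x.2 : ℚ) := by
        rw [← hx12Q]; ring
      rcases hcases with h | h
      · have := hGlt x.1 h1 h
        have := hHlow x.2 h2
        linarith
      · have := hHlt x.2 h2 h
        have := hGlow x.1 h1
        linarith)
    refine ⟨hdom.1, ?_⟩
    rw [hdom.2, hval]
  have hdomB : (G * H).coeff (bG + bH) ≠ 0 ∧
      nuQ p ((G * H).coeff (bG + bH)) = μG + μH - s * (bG + bH) := by
    rw [Polynomial.coeff_mul]
    have hmem : ((bG, bH) : ℕ × ℕ) ∈ Finset.HasAntidiagonal.antidiagonal (bG + bH) :=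
      Finset.HasAntidiagonal.mem_antidiagonal.mpr rfl
    have hta : G.coeff bG * H.coeff bH ≠ 0 := mul_ne_zero hbG hbH
    have hval : nuQ p (G.coeff bG * H.coeff bH) = μG + μH - s * ((bG : ℚ) + bH) := by
      rw [nuQ_mul hbG hbH]; linear_combination hbGval + hbHval
    have hdom := nuQ_sum_dom (p := p)
      (t := fun x : ℕ × ℕ => G.coeff x.1 * H.coeff x.2) hmem hta (fun x hx hxa htx => by
      have h1 : G.coeff x.1 ≠ 0 := left_ne_zero_of_mul htx
      have h2 : H.coeff x.2 ≠ 0 := right_ne_zero_of_mul htx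
      rw [nuQ_mul h1 h2, hval]
      have hx12 : x.1 + x.2 = bG + bH := Finset.HasAntidiagonal.mem_antidiagonal.mp hx
      have hx12Q : (x.1 : ℚ) + (x.2 : ℚ) = (bG : ℚ) + bH := by exact_mod_cast hx12
      have hcases : bG < x.1 ∨ bH < x.2 := by
        rcases Nat.lt_or_ge bG x.1 with h | h
        · exact Or.inl h
        · right
          have : x.1 = bG ∨ x.1 < bG := eq_or_lt_of_le h
          rcases this with h' | h'
          · exfalso; apply hxa; ext <;> simp [h'] <;> omega
          · omega
      have hdist : s * ((bG : ℚ) + bH) = s * (x.1 : ℚ) + s * (x.2 : ℚ) := by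
        rw [← hx12Q]; ring
      rcases hcases with h | h
      · have := hGgt x.1 h1 h
        have := hHlow x.2 h2
        linarith
      · have := hHgt x.2 h2 h
        have := hGlow x.1 h1
        linarith)
    refine ⟨hdom.1, ?_⟩
    rw [hdom.2, hval]
  -- strict lower bound below aG + aH
  have hstrictA : ∀ k, k < aG + aH → (G * H).coeff k ≠ 0 →
      μG + μH - s * k < nuQ p ((G * H).coeff k) := by
    intro k hklt hk
    rw [Polynomial.coeff_mul] at hk ⊢
    refine nuQ_sum_lt (fun x hx htx => ?_) hk
    have h1 : G.coeff x.1 ≠ 0 := left_ne_zero_of_mul htx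
    have h2 : H.coeff x.2 ≠ 0 := right_ne_zero_of_mul htx
    rw [nuQ_mul h1 h2]
    have hx12 : x.1 + x.2 = k := Finset.HasAntidiagonal.mem_antidiagonal.mp hx
    have hx12Q : (x.1 : ℚ) + (x.2 : ℚ) = (k : ℚ) := by exact_mod_cast hx12
    have hcases : x.1 < aG ∨ x.2 < aH := by omega
    have hdist : s * (k : ℚ) = s * (x.1 : ℚ) + s * (x.2 : ℚ) := by rw [← hx12Q]; ring
    rcases hcases with h | h
    · have := hGlt x.1 h1 h
      have := hHlow x.2 h2
      linarith
    · have := hHlt x.2 h2 h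
      have := hGlow x.1 h1
      linarith
  -- strict lower bound above bG + bH
  have hstrictB : ∀ k, bG + bH < k → (G * H).coeff k ≠ 0 →
      μG + μH - s * k < nuQ p ((G * H).coeff k) := by
    intro k hklt hk
    rw [Polynomial.coeff_mul] at hk ⊢
    refine nuQ_sum_lt (fun x hx htx => ?_) hk
    have h1 : G.coeff x.1 ≠ 0 := left_ne_zero_of_mul htx
    have h2 : H.coeff x.2 ≠ 0 := right_ne_zero_of_mul htx
    rw [nuQ_mul h1 h2]
    have hx12 : x.1 + x.2 = k := Finset.HasAntidiagonal.mem_antidiagonal.mp hx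
    have hx12Q : (x.1 : ℚ) + (x.2 : ℚ) = (k : ℚ) := by exact_mod_cast hx12
    have hcases : bG < x.1 ∨ bH < x.2 := by omega
    have hdist : s * (k : ℚ) = s * (x.1 : ℚ) + s * (x.2 : ℚ) := by rw [← hx12Q]; ring
    rcases hcases with h | h
    · have := hGgt x.1 h1 h
      have := hHlow x.2 h2
      linarith
    · have := hHgt x.2 h2 h
      have := hGlow x.1 h1
      linarith
  -- weighted valuations of F at 0 and D
  have hWlowF : ∀ j, F.coeff j ≠ 0 → (r : ℚ) ≤ nuQ p (F.coeff j) + s * j := by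
    intro j hj
    have := hNB j hj
    linarith
  have hFD : F.coeff D ≠ 0 ∧ nuQ p (F.coeff D) + s * D = r := by
    have : F.coeff D = F.leadingCoeff := by rw [← hdeg, Polynomial.coeff_natDegree]
    rw [this, hlead, hsD]
    exact ⟨Polynomial.leadingCoeff_ne_zero.mpr hF0, by ring⟩
  -- μG + μH ≥ r
  have hsum_ge : (r : ℚ) ≤ μG + μH := by
    have h1 := hWlowF (aG + aH) (hGH ▸ hdomA.1)
    have h2 : nuQ p (F.coeff (aG + aH)) = μG + μH - s * (aG + aH) := by
      rw [hGH]; exact hdomA.2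
    rw [h2] at h1
    push_cast at h1
    linarith
  -- aG + aH = 0
  have haa : aG + aH = 0 := by
    by_contra hne
    have hpos : 0 < aG + aH := Nat.pos_of_ne_zero hne
    have := hstrictA 0 hpos (hGH ▸ h0ne)
    rw [← hGH] at this
    rw [h0val] at this
    push_cast at this
    linarith
  -- bG + bH = D
  have hbb : bG + bH = D := by
    have hbGle : bG ≤ m := Polynomial.le_natDegree_of_ne_zero hbG
    have hbHle : bH ≤ H.natDegree := Polynomial.le_natDegree_of_ne_zero hbH
    by_contra hne
    have hlt : bG + bH < D := by omega
    have := hstrictB D hlt (hGH ▸ hFD.1)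
    rw [← hGH] at this
    have hDval := hFD.2
    linarith
  have haG0 : aG = 0 := by omega
  have hbGm : bG = m := by
    have hbGle : bG ≤ m := Polynomial.le_natDegree_of_ne_zero hbG
    have hbHle : bH ≤ H.natDegree := Polynomial.le_natDegree_of_ne_zero hbH
    omega
  -- both 0 and m are minimizers for G
  have hkey : nuQ p (G.coeff 0) = nuQ p (G.coeff m) + s * m := by
    have h1 : nuQ p (G.coeff 0) + s * (0 : ℕ) = μG := haG0 ▸ haGval
    have h2 : nuQ p (G.coeff m) + s * m = μG := hbGm ▸ hbGval
    push_cast at h1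
    linarith
  -- integrality
  have hG0 : G.coeff 0 ≠ 0 := haG0 ▸ haG
  have hGm : G.coeff m ≠ 0 := hbGm ▸ hbG
  set v0 : ℤ := padicValRat p (G.coeff 0) with hv0
  set vm : ℤ := padicValRat p (G.coeff m) with hvm
  have hZQ : (v0 : ℚ) * D = (vm : ℚ) * D + (r : ℚ) * m := by
    have : (v0 : ℚ) = (vm : ℚ) + s * m := hkey
    have h2 : ((v0 : ℚ) - vm) * D = s * m * D := by rw [this]; ring
    have h3 : s * m * D = (r : ℚ) * m := by
      rw [hs]; field_simp
    linear_combination h2 + h3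
  have hZ : v0 * (D : ℤ) = vm * (D : ℤ) + (r : ℤ) * (m : ℤ) := by exact_mod_cast hZQ
  have hdvdZ : (D : ℤ) ∣ (r : ℤ) * (m : ℤ) := ⟨v0 - vm, by linear_combination -hZ⟩
  have hdvdN : D ∣ r * m := by
    have h := hdvdZ
    rw [show ((r : ℤ) * (m : ℤ)) = ((r * m : ℕ) : ℤ) by push_cast; ring] at h
    exact Int.ofNat_dvd.mp h
  have hDm : D ∣ m := Nat.Coprime.dvd_of_dvd_mul_left hco.symm hdvdN
  have : D ≤ m := Nat.le_of_dvd (by omega) hDm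
  omega

end Dumas

/-! ### Purity of iterates -/

section Iterates

variable {p : ℕ} [hp : Fact p.Prime]

lemma pure_base (r : ℕ) (hr : 1 ≤ r) (f : Polynomial ℚ) (d : ℕ)
    (hfd : f.natDegree = d) (hd : 2 ≤ d) (hpure : IsPpure p r f) :
    PureAt p r d f := by
  obtain ⟨h0, hl, hc, hmid⟩ := hpure
  have hdQ : (0 : ℚ) < d := by positivity
  refine ⟨hfd, h0, by rw [nuQ, hc]; push_cast; ring, by rw [nuQ, hl]; norm_num, ?_⟩
  intro j hj
  have hjle : j ≤ d := hfd ▸ Polynomial.le_natDegree_of_ne_zero hj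
  rcases Nat.eq_zero_or_pos j with hj0 | hjpos
  · subst hj0
    rw [nuQ, hc]
    push_cast
    simp
  rcases eq_or_lt_of_le hjle with hjd | hjd
  · subst hjd
    have : f.coeff j = f.leadingCoeff := by rw [← hfd, Polynomial.coeff_natDegree]
    rw [this, nuQ, hl]
    push_cast
    have : (r : ℚ) / j * j = r := by field_simp
    rw [this]
    norm_num
  · have := hmid j hjpos (hfd ▸ hjd) hj
    rw [hfd] at this
    have hdj : (0 : ℚ) < (d : ℚ) - j := by
      have : (j : ℚ) < d := by exact_mod_cast hjd
      linarith
    rw [div_le_div_iff₀ hdQ hdj] at this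
    have heq : (r : ℚ) - (r : ℚ) / d * j = (r * ((d : ℚ) - j)) / d := by
      field_simp
    rw [heq, div_le_iff₀ hdQ]
    linarith

lemma const_coeff_comp (r : ℕ) (hr : 1 ≤ r) (f : Polynomial ℚ) (d : ℕ)
    (hfd : f.natDegree = d) (hd : 2 ≤ d) (hpure : IsPpure p r f)
    (F : Polynomial ℚ) (hF0ne : F.coeff 0 ≠ 0) (hF0val : nuQ p (F.coeff 0) = r)
    (hfNB : NB p ((r : ℚ) / d) r f) :
    (f.comp F).coeff 0 ≠ 0 ∧ nuQ p ((f.comp F).coeff 0) = r := by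
  classical
  have hdQ : (0 : ℚ) < d := by positivity
  have hrQ : (1 : ℚ) ≤ r := by exact_mod_cast hr
  have hdQ2 : (2 : ℚ) ≤ d := by exact_mod_cast hd
  set c : ℚ := F.coeff 0 with hc
  have hkey : (f.comp F).coeff 0 = f.eval c := by
    rw [Polynomial.coeff_zero_eq_eval_zero, Polynomial.eval_comp,
      ← Polynomial.coeff_zero_eq_eval_zero]
  rw [hkey, Polynomial.eval_eq_sum_range]
  have h0mem : (0 : ℕ) ∈ Finset.range (f.natDegree + 1) := Finset.mem_range.mpr (by omega)
  have ht0ne : f.coeff 0 * c ^ 0 ≠ 0 := by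
    rw [pow_zero, mul_one]; exact hpure.1
  have ht0val : nuQ p (f.coeff 0 * c ^ 0) = r := by
    rw [pow_zero, mul_one, nuQ, hpure.2.2.1]; push_cast; ring
  have hdom := nuQ_sum_dom (p := p)
      (t := fun i : ℕ => f.coeff i * c ^ i) h0mem ht0ne (fun i _ hi0 hti => by
    have hai : f.coeff i ≠ 0 := left_ne_zero_of_mul hti
    have hci : c ^ i ≠ 0 := right_ne_zero_of_mul hti
    have hcne : c ≠ 0 := fun h => hci (by rw [h]; exact zero_pow hi0)
    rw [ht0val, nuQ_mul hai hci, nuQ_pow hcne, hF0val]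
    have b1 : (r : ℚ) - (r : ℚ) / d * i ≤ nuQ p (f.coeff i) := hfNB i hai
    have hipos : (1 : ℚ) ≤ (i : ℚ) := by
      have : 1 ≤ i := Nat.one_le_iff_ne_zero.mpr hi0
      exact_mod_cast this
    have hprod : (0 : ℚ) < (i : ℚ) * r := by nlinarith
    have hfrac : (r : ℚ) / d * i < (i : ℚ) * r := by
      rw [div_mul_eq_mul_div, div_lt_iff₀ hdQ]
      nlinarith [mul_nonneg (le_of_lt hprod) (by linarith : (0 : ℚ) ≤ (d : ℚ) - 2)]
    linarith)
  exact ⟨hdom.1, by rw [hdom.2, ht0val]⟩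

lemma pure_iter (r : ℕ) (hr : 1 ≤ r) (f : Polynomial ℚ) (d : ℕ)
    (hfd : f.natDegree = d) (hd : 2 ≤ d) (hpure : IsPpure p r f) :
    ∀ n, 1 ≤ n → PureAt p r (d ^ n) (polyIter f n) := by
  have hbase := pure_base r hr f d hfd hd hpure
  have hdQ : (0 : ℚ) < d := by positivity
  intro n
  induction n with
  | zero => intro hn; omega
  | succ n ih =>
    intro _
    rcases Nat.eq_zero_or_pos n with hn0 | hnpos
    · subst hn0
      simpa [polyIter, Polynomial.comp_X, pow_one] using hbase
    obtain ⟨hFdeg, hF0ne, hF0val, hFlead, hFNB⟩ := ih hnpos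
    set F := polyIter f n with hF
    have hFne : F ≠ 0 := fun h => hF0ne (by simp [h])
    have hDpos : 1 ≤ d ^ n := Nat.one_le_pow _ _ (by omega)
    have hDQ : (0 : ℚ) < (d : ℚ) ^ n := by positivity
    have hcastD : ((d ^ n : ℕ) : ℚ) = (d : ℚ) ^ n := by push_cast; ring
    have hFdeg' : F.natDegree ≠ 0 := by omega
    have hcomp : polyIter f (n + 1) = f.comp F := rfl
    have hfne : f ≠ 0 := fun h => hpure.1 (by simp [h])
    have hfleadne : f.leadingCoeff ≠ 0 := Polynomial.leadingCoeff_ne_zero.mpr hfne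
    have hFleadne : F.leadingCoeff ≠ 0 := Polynomial.leadingCoeff_ne_zero.mpr hFne
    obtain ⟨_, hf0ne, hf0val, hflead, hfNB⟩ := hbase
    refine ⟨?_, ?_, ?_, ?_, ?_⟩
    · rw [hcomp, Polynomial.natDegree_comp, hfd, hFdeg, ← pow_succ']
    · -- constant coefficient nonzero
      rw [hcomp]
      have := const_coeff_comp (p := p) r hr f d hfd hd hpure F hF0ne hF0val hfNB
      exact this.1
    · rw [hcomp]
      exact (const_coeff_comp (p := p) r hr f d hfd hd hpure F hF0ne hF0val hfNB).2
    · rw [hcomp, Polynomial.leadingCoeff_comp hFdeg', nuQ_mul hfleadne (pow_ne_zero _ hFleadne),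
        nuQ_pow hFleadne, hflead, hFlead, hfd]
      ring
    · -- the NB bound for the composition
      intro j hj
      rw [hcomp] at hj ⊢
      have hsum : f.comp F = ∑ i ∈ Finset.range (f.natDegree + 1),
          Polynomial.C (f.coeff i) * F ^ i := by
        rw [Polynomial.comp, Polynomial.eval₂_eq_sum_range]
      rw [hsum, Polynomial.finset_sum_coeff] at hj ⊢
      refine nuQ_sum_le (fun i _ hti => ?_) hj
      rw [Polynomial.coeff_C_mul] at hti ⊢
      have hai : f.coeff i ≠ 0 := left_ne_zero_of_mul hti
      have hFij : (F ^ i).coeff j ≠ 0 := right_ne_zero_of_mul hti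
      have hjle : (j : ℚ) ≤ (i : ℚ) * (d : ℚ) ^ n := by
        have h1 : j ≤ (F ^ i).natDegree := Polynomial.le_natDegree_of_ne_zero hFij
        have h2 : (F ^ i).natDegree = i * d ^ n := by
          rw [Polynomial.natDegree_pow, hFdeg]
        have : j ≤ i * d ^ n := h2 ▸ h1
        exact_mod_cast this
      rw [nuQ_mul hai hFij]
      have b1 : (r : ℚ) - (r : ℚ) / d * i ≤ nuQ p (f.coeff i) := hfNB i hai
      have b2 : (i : ℚ) * r - (r : ℚ) / (d ^ n : ℕ) * j ≤ nuQ p ((F ^ i).coeff j) := by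
        have := (hFNB.pow i) j hFij
        push_cast at this ⊢
        linarith
      have hgap : (r : ℚ) - (r : ℚ) / (d ^ (n + 1) : ℕ) * j ≤
          ((r : ℚ) - (r : ℚ) / d * i) + ((i : ℚ) * r - (r : ℚ) / (d ^ n : ℕ) * j) := by
        rw [hcastD]
        have hcastD' : ((d ^ (n + 1) : ℕ) : ℚ) = (d : ℚ) * (d : ℚ) ^ n := by
          push_cast; ring
        rw [hcastD']
        have hne1 : (d : ℚ) ≠ 0 := ne_of_gt hdQ
        have hne2 : (d : ℚ) ^ n ≠ 0 := ne_of_gt hDQ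
        have hrQ : (1 : ℚ) ≤ r := by exact_mod_cast hr
        have hdQ2 : (2 : ℚ) ≤ d := by exact_mod_cast hd
        have hiden : (((r : ℚ) - (r : ℚ) / d * i) + ((i : ℚ) * r - (r : ℚ) / (d : ℚ) ^ n * j))
            - ((r : ℚ) - (r : ℚ) / ((d : ℚ) * (d : ℚ) ^ n) * j)
            = ((r : ℚ) * ((d : ℚ) - 1) / ((d : ℚ) * (d : ℚ) ^ n))
              * ((i : ℚ) * (d : ℚ) ^ n - j) := by
          field_simp
          ring
        have hfac1 : (0 : ℚ) ≤ (r : ℚ) * ((d : ℚ) - 1) / ((d : ℚ) * (d : ℚ) ^ n) := by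
          apply div_nonneg
          · nlinarith
          · positivity
        have hfac2 : (0 : ℚ) ≤ (i : ℚ) * (d : ℚ) ^ n - j := by linarith
        nlinarith [mul_nonneg hfac1 hfac2]
      calc (r : ℚ) - (r : ℚ) / (d ^ (n + 1) : ℕ) * j
          ≤ ((r : ℚ) - (r : ℚ) / d * i) + ((i : ℚ) * r - (r : ℚ) / (d ^ n : ℕ) * j) := hgap
        _ ≤ nuQ p (f.coeff i) + nuQ p ((F ^ i).coeff j) := by
            have := add_le_add b1 b2
            push_cast at this ⊢
            linarith

end Iterates

/-- Corollary 1.5: every iterate of a `p^r`-Dumas polynomial is irreducible over `ℚ`. -/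
theorem dumas_iterate_irreducible
    (p r : ℕ) (hp : p.Prime) (hr : 1 ≤ r)
    (f : Polynomial ℚ) (d : ℕ) (hfd : f.natDegree = d) (hd1 : 1 ≤ d)
    (hpure : IsPpure p r f) (hgcd : Nat.gcd r d = 1) :
    ∀ n : ℕ, 1 ≤ n → Irreducible (polyIter f n) := by
  haveI : Fact p.Prime := ⟨hp⟩
  intro n hn
  have hdegIter : ∀ m : ℕ, (polyIter f m).natDegree = d ^ m := by
    intro m
    induction m with
    | zero => simp [polyIter]
    | succ m ih =>
      show (f.comp (polyIter f m)).natDegree = d ^ (m + 1)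
      rw [Polynomial.natDegree_comp, hfd, ih, ← pow_succ']
  rcases eq_or_lt_of_le hd1 with hd1' | hd2
  · -- degree 1: every iterate has degree 1, hence is irreducible
    have hdeg1 : (polyIter f n).natDegree = 1 := by
      rw [hdegIter n, ← hd1', one_pow]
    have hne : polyIter f n ≠ 0 := fun h => by rw [h] at hdeg1; simp at hdeg1
    apply Polynomial.irreducible_of_degree_eq_one
    rw [Polynomial.degree_eq_natDegree hne, hdeg1]
    rfl
  · -- degree ≥ 2: apply the Dumas criterion to the pure iterate
    have hd2' : 2 ≤ d := hd2
    have hpureIter := pure_iter (p := p) r hr f d hfd hd2' hpure n hn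
    refine dumas_irreducible (p := p) r (d ^ n) hr ?_ ?_ (polyIter f n) hpureIter
    · calc 2 ≤ d := hd2'
        _ = d ^ 1 := (pow_one d).symm
        _ ≤ d ^ n := Nat.pow_le_pow_right (by omega) hn
    · exact Nat.Coprime.pow_right n hgcd
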